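/- Let s₁, …, sₙ be linearly independent vectors in ℝⁿ with Gram matrix G, let M = [s₁ ⋯ sₙ], let s = s₁ + ⋯ + sₙ, and suppose u₀ is the unit vector satisfying ⟨u₀, s₁⟩ = ⋯ = ⟨u₀, sₙ⟩ > 0. Then ⟨u₀, s⟩ = n / √‖(1,…,1)·G⁻¹‖₁, where ‖·‖₁ denotes the ℓ¹-norm; moreover all entries of (1,…,1)·G⁻¹ are then nonnegative up to the normalization used, and u₀ = M·α with α = (1/√‖(1,…,1)G⁻¹‖₁)·G⁻¹(1,…,1)ᵀ. -/

import Mathlib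

open scoped RealInnerProductSpace

/-- For a basis `s 1, …, s n` of `ℝⁿ` with Gram matrix `G`, and `u₀` the unit
vector with equal positive inner products with all `s i` (assuming `β = (1,…,1)G⁻¹` has
nonnegative entries), one has `⟨u₀, s⟩ = n/√‖β‖₁` and `u₀ = M·α` with
`α = (1/√‖β‖₁)·G⁻¹(1,…,1)ᵀ`. -/
theorem equal_inner_normal_formula {n : ℕ}
    (s : Fin n → EuclideanSpace ℝ (Fin n)) (hli : LinearIndependent ℝ s)
    (G : Matrix (Fin n) (Fin n) ℝ) (hG : ∀ i j, G i j = ⟪s i, s j⟫)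
    (u₀ : EuclideanSpace ℝ (Fin n)) (hu₀ : ‖u₀‖ = 1)
    (c : ℝ) (hc : 0 < c) (heq : ∀ i, ⟪u₀, s i⟫ = c)
    (β : Fin n → ℝ) (hβ : β = Matrix.vecMul (fun _ => (1 : ℝ)) G⁻¹)
    (hβnonneg : ∀ i, 0 ≤ β i) :
    ⟪u₀, ∑ i, s i⟫ = (n : ℝ) / Real.sqrt (∑ i, |β i|) ∧
    u₀ = ∑ i, ((Real.sqrt (∑ j, |β j|))⁻¹ * β i) • s i := by
  classical
  have hspan : ⊤ ≤ Submodule.span ℝ (Set.range s) := by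
    rw [hli.span_eq_top_of_card_eq_finrank' (by simp)]
  let b : Module.Basis (Fin n) ℝ (EuclideanSpace ℝ (Fin n)) := Module.Basis.mk hli hspan
  have hb : ∀ i, b i = s i := fun i => by simp [b]
  set α : Fin n → ℝ := fun i => b.repr u₀ i with hα
  have hrepr : u₀ = ∑ i, α i • s i := by
    conv_lhs => rw [← b.sum_repr u₀]
    refine Finset.sum_congr rfl fun i _ => by rw [hb]
  -- G is invertible
  have hGunit : IsUnit G := by
    rw [← Matrix.vecMul_injective_iff_isUnit]
    intro x y hxy
    have hxy' : Matrix.vecMul x G = Matrix.vecMul y G := hxy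
    have h : ∀ z : Fin n → ℝ, Matrix.vecMul z G = 0 → z = 0 := by
      intro z hz
      have hzero : (∑ i, z i • s i) = 0 := by
        have horth : ∀ j, ⟪∑ i, z i • s i, s j⟫ = 0 := by
          intro j
          have h0 := congrFun hz j
          have : ∑ i, z i * G i j = 0 := by
            simpa [Matrix.vecMul, dotProduct, Finset.mul_sum, mul_assoc] using h0
          rw [sum_inner]
          simpa [real_inner_smul_left, hG, Finset.mul_sum, mul_assoc] using this
        have : ⟪∑ i, z i • s i, ∑ i, z i • s i⟫ = 0 := by
          rw [inner_sum]
          refine Finset.sum_eq_zero fun j _ => by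
            rw [real_inner_smul_right, horth j, mul_zero]
        exact inner_self_eq_zero.mp this
      funext i
      have := linearIndependent_iff'.mp hli Finset.univ z (by simpa using hzero) i (Finset.mem_univ i)
      simpa using this
    have hsub : Matrix.vecMul (x - y) G = 0 := by
      rw [Matrix.sub_vecMul, hxy', sub_self]
    exact sub_eq_zero.mp (h _ hsub)
  have hGdet : IsUnit G.det := (Matrix.isUnit_iff_isUnit_det G).mp hGunit
  -- α G = c 1
  have hαG : Matrix.vecMul α G = fun _ => c := by
    funext j
    have h1 : ⟪u₀, s j⟫ = ∑ i, α i * G i j := by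
      conv_lhs => rw [hrepr]
      rw [sum_inner]
      exact Finset.sum_congr rfl fun i _ => by rw [real_inner_smul_left, hG]
    have h2 := (heq j).symm.trans h1
    simpa [Matrix.vecMul, dotProduct] using h2.symm
  -- α = c • β
  have hαβ : α = fun i => c * β i := by
    have h1 : Matrix.vecMul (Matrix.vecMul α G) G⁻¹ = α := by
      rw [Matrix.vecMul_vecMul, Matrix.mul_nonsing_inv _ hGdet, Matrix.vecMul_one]
    rw [hαG] at h1
    have h2 : (fun _ : Fin n => c) = c • (fun _ : Fin n => (1:ℝ)) := by
      funext i; simp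
    rw [h2, Matrix.smul_vecMul, ← hβ] at h1
    funext i
    rw [← h1]; simp
  -- sum of β
  have hsum : ∑ i, |β i| = ∑ i, β i := by
    exact Finset.sum_congr rfl fun i _ => abs_of_nonneg (hβnonneg i)
  have hnorm : c ^ 2 * ∑ i, β i = 1 := by
    have h1 : ⟪u₀, u₀⟫ = 1 := by
      rw [real_inner_self_eq_norm_sq, hu₀]; norm_num
    have h2 : ⟪u₀, u₀⟫ = ∑ i, α i * c := by
      nth_rewrite 2 [hrepr]
      rw [inner_sum]
      exact Finset.sum_congr rfl fun i _ => by rw [real_inner_smul_right, heq]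
    rw [h2, hαβ] at h1
    rw [← h1, Finset.mul_sum]
    exact Finset.sum_congr rfl fun i _ => by ring
  have hβsum : ∑ i, β i = (c⁻¹) ^ 2 := by
    field_simp
    nlinarith [hnorm]
  have hsqrt : Real.sqrt (∑ i, |β i|) = c⁻¹ := by
    rw [hsum, hβsum, Real.sqrt_sq (by positivity)]
  constructor
  · rw [inner_sum, hsqrt]
    simp only [heq]
    rw [Finset.sum_const, Finset.card_univ, Fintype.card_fin]
    field_simp
    exact nsmul_eq_mul n c
  · rw [hsqrt]
    conv_lhs => rw [hrepr]
    refine Finset.sum_congr rfl fun i _ => ?_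
    rw [hαβ]
    simp
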